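/- Fix N = 4, h > 0, and constants p₁₀,…,p₄₀ and q₅₀,…,q₈₀ ∈ ℝ, and set H₁ := H(p₁₀,…,p₄₀,q₅₀,…,q₈₀) where H(u₁,…,u₄,v₁,…,v₄) = (1/h²)·Σ_{i∈ℤ/4}(u_i u_{i-1} + v_i v_{i-1}) - (1/h⁴)·Σ_{i∈ℤ/4} ln(1+h²(u_i²+v_i²)). Let c_i denote the partial derivative of H with respect to u_i and e_i the partial derivative with respect to v_i, both evaluated at (p₁₀,…,p₄₀,q₅₀,…,q₈₀). Given also initial values p₅₀,…,p₈₀ and q₁₀,…,q₄₀ ∈ ℝ, define for i = 1,…,4: p_i(t) := p_{i0}, q_{4+i}(t) := q_{4+i,0}, p_{4+i}(t) := (√(1+h²p_{i0}²)/h)·tan(t·h·c_i·√(1+h²p_{i0}²) + arctan(h·p_{4+i,0}/√(1+h²p_{i0}²))), and q_i(t) := (√(1+h²q_{4+i,0}²)/h)·tan(-t·h·e_i·√(1+h²q_{4+i,0}²) + arctan(h·q_{i0}/√(1+h²q_{4+i,0}²))). Then, on the interval of t around 0 where all tangent arguments lie in (-π/2,π/2), these functions satisfy p_i' = 0, q_{4+i}'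 = 0, p_{4+i}'(t) = (1 + h²(p_{i0}² + p_{4+i}(t)²))·c_i, q_i'(t) = -(1 + h²(q_i(t)² + q_{4+i,0}²))·e_i, together with the given initial conditions at t = 0. -/

import Mathlib

open Real
open scoped BigOperators


lemma tan_deriv_aux {x : ℝ} (hx : x ∈ Set.Ioo (-(π / 2)) (π / 2)) :
    HasDerivAt tan (1 + tan x ^ 2) x := by
  have hc := Real.cos_pos_of_mem_Ioo hx
  have := Real.hasDerivAt_tan hc.ne'
  rwa [one_div, ← Real.inv_one_add_tan_sq hc.ne', inv_inv] at this


/-- The Ablowitz–Ladik Hamiltonian with N = 4: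
H(u₁,…,u₄,v₁,…,v₄) = (1/h²)·Σ_{i∈ℤ/4}(u_i u_{i-1} + v_i v_{i-1})
  - (1/h⁴)·Σ_{i∈ℤ/4} ln(1 + h²(u_i² + v_i²)). -/
noncomputable def ALH4 (h : ℝ) (u v : ZMod 4 → ℝ) : ℝ :=
  (1 / h ^ 2) * ∑ i : ZMod 4, (u i * u (i - 1) + v i * v (i - 1))
    - (1 / h ^ 4) * ∑ i : ZMod 4, Real.log (1 + h ^ 2 * ((u i) ^ 2 + (v i) ^ 2))

/-- Exact solution of the subsystem with Hamiltonian H₁ = H(p₁,…,p₄,q₅,…,q₈) in the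
extended-phase-space splitting of the Ablowitz–Ladik model with N = 4.
`P0 i` is the frozen value p_{i0}, `Q0 i` is the frozen value q_{4+i,0},
`P40 i` is the initial value p_{4+i,0} and `Q00 i` is the initial value q_{i0};
`c i` and `e i` are the frozen partial derivatives of H with respect to u_i and v_i. -/
theorem ablowitz_ladik_subsystem_exact_solution
    (h : ℝ) (hh : 0 < h) (P0 Q0 P40 Q00 : ZMod 4 → ℝ) :
    let c : ZMod 4 → ℝ := fun i => fderiv ℝ (fun a => ALH4 h a Q0) P0 (Pi.single i 1)
    let e : ZMod 4 → ℝ := fun i => fderiv ℝ (fun b => ALH4 h P0 b) Q0 (Pi.single i 1)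
    let pLow : ZMod 4 → ℝ → ℝ := fun i _ => P0 i
    let qHigh : ZMod 4 → ℝ → ℝ := fun i _ => Q0 i
    let pHigh : ZMod 4 → ℝ → ℝ := fun i t =>
      (Real.sqrt (1 + h ^ 2 * (P0 i) ^ 2) / h) *
        tan (t * h * c i * Real.sqrt (1 + h ^ 2 * (P0 i) ^ 2)
          + arctan (h * P40 i / Real.sqrt (1 + h ^ 2 * (P0 i) ^ 2)))
    let qLow : ZMod 4 → ℝ → ℝ := fun i t =>
      (Real.sqrt (1 + h ^ 2 * (Q0 i) ^ 2) / h) *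
        tan (-(t * h * e i * Real.sqrt (1 + h ^ 2 * (Q0 i) ^ 2))
          + arctan (h * Q00 i / Real.sqrt (1 + h ^ 2 * (Q0 i) ^ 2)))
    -- initial conditions at t = 0
    (∀ i : ZMod 4, pLow i 0 = P0 i) ∧
    (∀ i : ZMod 4, qHigh i 0 = Q0 i) ∧
    (∀ i : ZMod 4, pHigh i 0 = P40 i) ∧
    (∀ i : ZMod 4, qLow i 0 = Q00 i) ∧
    -- the differential equations, on the interval around 0 where all tangent
    -- arguments lie in (-π/2, π/2)
    (∀ t : ℝ,
      (∀ i : ZMod 4,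
        t * h * c i * Real.sqrt (1 + h ^ 2 * (P0 i) ^ 2)
            + arctan (h * P40 i / Real.sqrt (1 + h ^ 2 * (P0 i) ^ 2)) ∈
          Set.Ioo (-(π / 2)) (π / 2) ∧
        -(t * h * e i * Real.sqrt (1 + h ^ 2 * (Q0 i) ^ 2))
            + arctan (h * Q00 i / Real.sqrt (1 + h ^ 2 * (Q0 i) ^ 2)) ∈
          Set.Ioo (-(π / 2)) (π / 2)) →
      ∀ i : ZMod 4,
        HasDerivAt (pLow i) 0 t ∧
        HasDerivAt (qHigh i) 0 t ∧
        HasDerivAt (pHigh i) ((1 + h ^ 2 * ((P0 i) ^ 2 + (pHigh i t) ^ 2)) * c i) t ∧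
        HasDerivAt (qLow i) (-((1 + h ^ 2 * ((qLow i t) ^ 2 + (Q0 i) ^ 2)) * e i)) t) := by
  intro c e pLow qHigh pHigh qLow
  have hne : h ≠ 0 := hh.ne'
  have hApos : ∀ x : ℝ, 0 < Real.sqrt (1 + h ^ 2 * x ^ 2) := fun x =>
    Real.sqrt_pos.mpr (by positivity)
  have hAsq : ∀ x : ℝ, Real.sqrt (1 + h ^ 2 * x ^ 2) ^ 2 = 1 + h ^ 2 * x ^ 2 := fun x =>
    Real.sq_sqrt (by positivity)
  refine ⟨fun i => rfl, fun i => rfl, ?_, ?_, ?_⟩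
  · intro i
    simp only [pHigh, zero_mul, zero_add, Real.tan_arctan]
    field_simp
  · intro i
    simp only [qLow, zero_mul, neg_zero, zero_add, Real.tan_arctan]
    field_simp
  · intro t ht i
    obtain ⟨h1, h2⟩ := ht i
    refine ⟨hasDerivAt_const t _, hasDerivAt_const t _, ?_, ?_⟩
    · set A := Real.sqrt (1 + h ^ 2 * (P0 i) ^ 2) with hAdef
      set x := t * h * c i * A + arctan (h * P40 i / A) with hxdef
      have hg : HasDerivAt (fun s : ℝ => s * h * c i * A + arctan (h * P40 i / A))
          (h * c i * A) t := by
        have := ((((hasDerivAt_id t).mul_const h).mul_const (c i)).mul_const A).add_const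
          (arctan (h * P40 i / A))
        simpa using this
      have htan := (tan_deriv_aux h1).comp t hg
      have := htan.const_mul (A / h)
      convert this using 1
      have hA2 : A ^ 2 = 1 + h ^ 2 * (P0 i) ^ 2 := hAsq _
      show (1 + h ^ 2 * ((P0 i) ^ 2 + (A / h * tan x) ^ 2)) * c i
          = A / h * ((1 + tan x ^ 2) * (h * c i * A))
      field_simp
      have hA2 : A ^ 2 = 1 + h ^ 2 * (P0 i) ^ 2 := hAsq _
      linear_combination (-(c i)) * hA2
      all_goals rfl
    · set A := Real.sqrt (1 + h ^ 2 * (Q0 i) ^ 2) with hAdef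
      set x := -(t * h * e i * A) + arctan (h * Q00 i / A) with hxdef
      have hg : HasDerivAt (fun s : ℝ => -(s * h * e i * A) + arctan (h * Q00 i / A))
          (-(h * e i * A)) t := by
        have := (((((hasDerivAt_id t).mul_const h).mul_const (e i)).mul_const A).neg).add_const
          (arctan (h * Q00 i / A))
        simpa using this
      have htan := (tan_deriv_aux h2).comp t hg
      have := htan.const_mul (A / h)
      convert this using 1
      have hA2 : A ^ 2 = 1 + h ^ 2 * (Q0 i) ^ 2 := hAsq _
      show -((1 + h ^ 2 * ((A / h * tan x) ^ 2 + (Q0 i) ^ 2)) * e i)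
          = A / h * ((1 + tan x ^ 2) * -(h * e i * A))
      field_simp
      have hA2 : A ^ 2 = 1 + h ^ 2 * (Q0 i) ^ 2 := hAsq _
      linear_combination (e i) * hA2
      all_goals rfl
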